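/- Let Γ be a finite simple graph with an even number of vertices. If Γ has an isolated vertex (a vertex of degree 0), then Lights Out is not universally solvable on the complement graph Γ^C. -/
import Mathlib

open Matrix in
/-- An odd-size symmetric matrix with zero diagonal over `ZMod 2` has zero determinant. -/
lemma det_alt_odd {m : ℕ} (hm : Odd m) (C : Matrix (Fin m) (Fin m) (ZMod 2))
    (hsymm : ∀ i j, C i j = C j i) (hdiag : ∀ i, C i i = 0) : C.det = 0 := by
  -- lift to a skew-symmetric integer matrix
  set B := (Matrix.of fun i j => if C i j = 1 then (if i < j then 1 else -1) else 0 :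
    Matrix (Fin m) (Fin m) ℤ) with hB
  have hskew : Bᵀ = -B := by
    ext i j
    simp only [Matrix.transpose_apply, Matrix.neg_apply, hB, Matrix.of_apply]
    rcases lt_trichotomy i j with h | h | h
    · rw [hsymm j i]
      by_cases hc : C i j = 1 <;> simp [hc, h, not_lt.2 h.le]
    · subst h
      simp [hdiag i, (by decide : (0 : ZMod 2) ≠ 1)]
    · rw [hsymm j i]
      by_cases hc : C i j = 1 <;> simp [hc, h, not_lt.2 h.le]
  have hdetB : B.det = 0 := by
    have h1 : B.det = (-B).det := by rw [← hskew, Matrix.det_transpose]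
    rw [Matrix.det_neg, Fintype.card_fin, hm.neg_one_pow] at h1
    linarith
  have hmap : C = B.map (Int.cast : ℤ → ZMod 2) := by
    ext i j
    simp only [Matrix.map_apply, hB, Matrix.of_apply]
    by_cases hc : C i j = 1
    · by_cases hlt : i < j <;> simp [hc, hlt] <;> decide
    · have : C i j = 0 := by
        have := (by decide : ∀ x : ZMod 2, x ≠ 1 → x = 0)
        exact this _ hc
      simp [hc, this]
  rw [hmap]
  have h := RingHom.map_det (Int.castRingHom (ZMod 2)) B
  rw [hdetB, map_zero] at h
  simpa [RingHom.mapMatrix_apply] using h.symm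

open scoped Classical in
/-- The neighborhood matrix of a finite simple graph over the field `ZMod 2`:
the entry at `(i, j)` is `1` if `i = j` or `i` and `j` are adjacent, and `0` otherwise. -/
noncomputable def nbhdMatrix {V : Type} [Fintype V] [DecidableEq V] (G : SimpleGraph V) :
    Matrix V V (ZMod 2) :=
  Matrix.of fun i j => if i = j ∨ G.Adj i j then 1 else 0

/-- Lights Out is universally solvable on a finite simple graph iff its neighborhood
matrix over `ZMod 2` is invertible. -/
def UniversallySolvable {V : Type} [Fintype V] [DecidableEq V] (G : SimpleGraph V) : Prop :=
  IsUnit (nbhdMatrix G)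

/-- If a finite simple graph `Γ` with an even number of vertices has an isolated vertex,
then Lights Out is not universally solvable on the complement graph `Γᶜ`. -/
theorem not_universallySolvable_compl_of_isolated_of_even {V : Type} [Fintype V]
    [DecidableEq V] (G : SimpleGraph V) (heven : Even (Fintype.card V))
    (v : V) (hv : ∀ w : V, ¬ G.Adj v w) :
    ¬ UniversallySolvable Gᶜ := by
  classical
  intro hU
  set M := nbhdMatrix Gᶜ with hM
  -- entries of M
  have hMvj : ∀ j, M v j = 1 := by
    intro j
    simp only [hM, nbhdMatrix, Matrix.of_apply]
    by_cases h : v = j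
    · simp [h]
    · have : Gᶜ.Adj v j := ⟨h, hv j⟩
      simp [this]
  have hMiv : ∀ i, M i v = 1 := by
    intro i
    simp only [hM, nbhdMatrix, Matrix.of_apply]
    by_cases h : i = v
    · simp [h]
    · have : Gᶜ.Adj i v := ⟨h, fun hadj => hv i hadj.symm⟩
      simp [this]
  -- the subtype of vertices other than v
  set S := {w : V // w ≠ v} with hS
  -- the adjacency matrix of G restricted to S
  set C : Matrix S S (ZMod 2) :=
    Matrix.of fun i j => if G.Adj i.1 j.1 then 1 else 0 with hC
  have hCsymm : ∀ i j : S, C i j = C j i := by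
    intro i j
    simp only [hC, Matrix.of_apply]
    rw [SimpleGraph.adj_comm]
  have hCdiag : ∀ i : S, C i i = 0 := by
    intro i; simp [hC]
  -- relation between M and C off the vertex v
  have hMC : ∀ i j : S, M i.1 j.1 = C i j + 1 := by
    intro i j
    simp only [hM, hC, nbhdMatrix, Matrix.of_apply]
    by_cases hij : i.1 = j.1
    · have : i = j := Subtype.ext hij
      subst this
      simp [hij]
    · by_cases h : G.Adj i.1 j.1
      · have : ¬ Gᶜ.Adj i.1 j.1 := fun hc => hc.2 h
        simp [hij, this, h]
        decide
      · have : Gᶜ.Adj i.1 j.1 := ⟨hij, h⟩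
        simp [hij, this, h]
  -- card S is odd
  have hcardS : Odd (Fintype.card S) := by
    have h1 : Fintype.card S = Fintype.card V - 1 := by
      simp [hS, Fintype.card_subtype_compl (fun x => x = v), Fintype.card_subtype_eq]
    have h2 : 0 < Fintype.card V := Fintype.card_pos_iff.2 ⟨v⟩
    rcases heven with ⟨k, hk⟩
    have hk1 : 1 ≤ k := by omega
    exact ⟨k - 1, by omega⟩
  -- det C = 0
  have hdetC : C.det = 0 := by
    obtain e := Fintype.equivFin S
    have := det_alt_odd (m := Fintype.card S) hcardS (C.submatrix e.symm e.symm)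
      (fun i j => hCsymm _ _) (fun i => hCdiag _)
    rwa [Matrix.det_submatrix_equiv_self] at this
  -- get a nonzero kernel vector of C
  obtain ⟨y', hy'ne, hy'⟩ := (Matrix.exists_mulVec_eq_zero_iff).2 hdetC
  -- build a kernel vector of M
  set t : ZMod 2 := ∑ j : S, y' j with ht
  set y : V → ZMod 2 := fun w => if h : w = v then t else y' ⟨w, h⟩ with hy
  have hyv : y v = t := by simp [hy]
  have hyS : ∀ j : S, y j.1 = y' j := by
    intro j; simp [hy, j.2]
  have hsplit : ∀ f : V → ZMod 2, ∑ j : V, f j = f v + ∑ j : S, f j.1 := by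
    intro f
    rw [Fintype.sum_eq_add_sum_compl v f]
    congr 1
    show ∑ i ∈ ({v}ᶜ : Finset V), f i = ∑ j : {w : V // w ≠ v}, f j.1
    exact (Finset.sum_subtype (p := fun w => w ≠ v) ({v}ᶜ) (fun x => by simp) f)
  have hker : M.mulVec y = 0 := by
    funext i
    show ∑ j : V, M i j * y j = 0
    by_cases hiv : i = v
    · subst hiv
      rw [hsplit]
      simp only [hMvj, one_mul, hyv]
      rw [Finset.sum_congr rfl (fun j _ => hyS j)]
      rw [← ht]
      exact (by decide : ∀ a : ZMod 2, a + a = 0) t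
    · rw [hsplit]
      rw [hMiv, one_mul, hyv]
      have : ∑ j : S, M i j.1 * y j.1 = (∑ j : S, C ⟨i, hiv⟩ j * y' j) + ∑ j : S, y' j := by
        rw [← Finset.sum_add_distrib]
        refine Finset.sum_congr rfl (fun j _ => ?_)
        rw [hyS j, hMC ⟨i, hiv⟩ j, add_mul, one_mul]
      rw [this]
      have hCy : ∑ j : S, C ⟨i, hiv⟩ j * y' j = 0 := by
        have := congrFun hy' ⟨i, hiv⟩
        simpa [Matrix.mulVec, dotProduct] using this
      rw [hCy, zero_add, ← ht]
      exact (by decide : ∀ a : ZMod 2, a + a = 0) t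
  -- y is nonzero
  have hyne : y ≠ 0 := by
    intro h0
    apply hy'ne
    funext j
    have := congrFun h0 j.1
    rw [hyS j] at this
    exact this
  -- contradiction with invertibility
  have hdetM : M.det = 0 := (Matrix.exists_mulVec_eq_zero_iff).1 ⟨y, hyne, hker⟩
  have := (Matrix.isUnit_iff_isUnit_det M).1 hU
  rw [hdetM] at this
  exact (by decide : ¬ IsUnit (0 : ZMod 2)) this
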